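/- arXiv:1811.01149 — 3 statements merged into one kernel-verified Lean document; each statement's English description precedes it below -/
import Mathlib

section
/- Suppose u, p : [θmin, θmax] → ℝ are differentiable with u'(θ) ≥ 0 and p'(θ) = θ·u'(θ) for all θ in the interval. Then the contract is incentive compatible: for all θ, θ' ∈ [θmin, θmax], θ·u(θ) − p(θ) ≥ θ·u(θ') − p(θ'). -/
theorem feasible_contract_ic (θmin θmax : ℝ) (u p u' p' : ℝ → ℝ)
    (hu : ∀ x ∈ Set.Icc θmin θmax, HasDerivAt u (u' x) x)
    (hp : ∀ x ∈ Set.Icc θmin θmax, HasDerivAt p (p' x) x)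
    (hu' : ∀ x ∈ Set.Icc θmin θmax, 0 ≤ u' x)
    (hc : ∀ x ∈ Set.Icc θmin θmax, p' x = x * u' x) :
    ∀ θ ∈ Set.Icc θmin θmax, ∀ θ' ∈ Set.Icc θmin θmax,
      θ * u θ - p θ ≥ θ * u θ' - p θ' := by
  intro θ hθ θ' hθ'
  set g : ℝ → ℝ := fun x => θ * u x - p x with hg
  have hgd : ∀ x ∈ Set.Icc θmin θmax, HasDerivAt g ((θ - x) * u' x) x := by
    intro x hx
    have := ((hu x hx).const_mul θ).sub (hp x hx)
    have h : θ * u' x - p' x = (θ - x) * u' x := by rw [hc x hx]; ring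
    rw [h] at this; exact this
  rcases le_total θ' θ with hle | hle
  · -- g monotone on Icc θ' θ
    have hsub : Set.Icc θ' θ ⊆ Set.Icc θmin θmax :=
      Set.Icc_subset_Icc hθ'.1 hθ.2
    have hmono : MonotoneOn g (Set.Icc θ' θ) := by
      apply monotoneOn_of_hasDerivWithinAt_nonneg (convex_Icc θ' θ)
      · intro x hx; exact (hgd x (hsub hx)).continuousAt.continuousWithinAt
      · intro x hx
        exact (hgd x (hsub (interior_subset hx))).hasDerivWithinAt
      · intro x hx
        have hx' := hsub (interior_subset hx)
        have : x ≤ θ := (interior_subset hx).2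
        exact mul_nonneg (by linarith) (hu' x hx')
    exact hmono (Set.left_mem_Icc.2 hle) (Set.right_mem_Icc.2 hle) hle
  · -- g antitone on Icc θ θ'
    have hsub : Set.Icc θ θ' ⊆ Set.Icc θmin θmax :=
      Set.Icc_subset_Icc hθ.1 hθ'.2
    have hanti : AntitoneOn g (Set.Icc θ θ') := by
      apply antitoneOn_of_hasDerivWithinAt_nonpos (convex_Icc θ θ')
      · intro x hx; exact (hgd x (hsub hx)).continuousAt.continuousWithinAt
      · intro x hx
        exact (hgd x (hsub (interior_subset hx))).hasDerivWithinAt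
      · intro x hx
        have hx' := hsub (interior_subset hx)
        have : θ ≤ x := (interior_subset hx).1
        exact mul_nonpos_of_nonpos_of_nonneg (by linarith) (hu' x hx')
    exact hanti (Set.left_mem_Icc.2 hle) (Set.right_mem_Icc.2 hle) hle
end

section
/- If u, p : [θmin, θmax] → ℝ satisfy incentive compatibility and u is differentiable at an interior point θ with u'(θ) ≠ 0 and p is differentiable at θ, then p'(θ) = θ·u'(θ). -/
theorem ic_implies_deriv_condition (θmin θmax θ u' p' : ℝ) (u p : ℝ → ℝ)
    (hIC : ∀ a ∈ Set.Icc θmin θmax, ∀ b ∈ Set.Icc θmin θmax,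
      a * u a - p a ≥ a * u b - p b)
    (hθ : θ ∈ Set.Ioo θmin θmax)
    (hu : HasDerivAt u u' θ) (hu' : u' ≠ 0)
    (hp : HasDerivAt p p' θ) :
    p' = θ * u' := by
  have hf : HasDerivAt (fun x => θ * u x - p x) (θ * u' - p') θ :=
    ((hu.const_mul θ).sub hp)
  have hmax : IsLocalMax (fun x => θ * u x - p x) θ := by
    filter_upwards [Ioo_mem_nhds hθ.1 hθ.2] with x hx
    exact hIC θ (Set.mem_Icc_of_Ioo hθ) x (Set.mem_Icc_of_Ioo hx)
  have := hmax.hasDerivAt_eq_zero hf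
  linarith
end

section
/- Suppose u, p : [θmin, θmax] → ℝ are differentiable with p'(x) = x·u'(x) and u'(x) ≥ 0 for all x, and θmin·u(θmin) − p(θmin) − M ≥ 0. Then for θ > θmin, θ·u(θ) − p(θ) − M ≥ (θ − θmin)·u(θmin); in particular if u(θmin) ≥ 0 the UAV utility is nonnegative for all types. -/
lemma mono_of_hasDerivAt {a b : ℝ} {f f' : ℝ → ℝ}
    (h : ∀ x ∈ Set.Icc a b, HasDerivAt f (f' x) x)
    (h' : ∀ x ∈ Set.Icc a b, 0 ≤ f' x) :
    MonotoneOn f (Set.Icc a b) := by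
  apply monotoneOn_of_deriv_nonneg (convex_Icc a b)
  · exact ContinuousOn.mono (fun x hx => ((h x hx).continuousAt).continuousWithinAt) (by simp)
  · intro x hx
    rw [interior_Icc] at hx
    exact ((h x (Set.Ioo_subset_Icc_self hx)).differentiableAt).differentiableWithinAt
  · intro x hx
    rw [interior_Icc] at hx
    rw [(h x (Set.Ioo_subset_Icc_self hx)).deriv]
    exact h' x (Set.Ioo_subset_Icc_self hx)

theorem ir_key_inequality (θmin θmax M : ℝ) (u p u' p' : ℝ → ℝ)
    (hu : ∀ x ∈ Set.Icc θmin θmax, HasDerivAt u (u' x) x)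
    (hp : ∀ x ∈ Set.Icc θmin θmax, HasDerivAt p (p' x) x)
    (hu' : ∀ x ∈ Set.Icc θmin θmax, 0 ≤ u' x)
    (hc : ∀ x ∈ Set.Icc θmin θmax, p' x = x * u' x)
    (hIRmin : θmin * u θmin - p θmin - M ≥ 0) :
    ∀ θ ∈ Set.Icc θmin θmax, θ > θmin →
      θ * u θ - p θ - M ≥ (θ - θmin) * u θmin ∧
      (0 ≤ u θmin → θ * u θ - p θ - M ≥ 0) := by
  intro θ hθ hgt
  have hsub : Set.Icc θmin θ ⊆ Set.Icc θmin θmax :=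
    Set.Icc_subset_Icc le_rfl hθ.2
  have humono : MonotoneOn u (Set.Icc θmin θmax) := mono_of_hasDerivAt hu hu'
  have hminmem : θmin ∈ Set.Icc θmin θmax := ⟨le_rfl, le_trans hgt.le hθ.2⟩
  -- g x = x * u x - p x - x * u θmin, g' x = u x - u θmin on the set
  have hg : ∀ x ∈ Set.Icc θmin θ,
      HasDerivAt (fun x => x * u x - p x - x * u θmin) (u x - u θmin) x := by
    intro x hx
    have h1 : HasDerivAt (fun x => x * u x) (1 * u x + x * u' x) x :=
      (hasDerivAt_id x).mul (hu x (hsub hx))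
    have h2 : HasDerivAt (fun x => x * u θmin) (u θmin) x := by
      simpa using (hasDerivAt_id x).mul_const (u θmin)
    have := (h1.sub (hp x (hsub hx))).sub h2
    refine this.congr_deriv ?_
    rw [hc x (hsub hx)]; ring
  have hg' : ∀ x ∈ Set.Icc θmin θ, 0 ≤ u x - u θmin := by
    intro x hx
    have := humono hminmem (hsub hx) hx.1
    linarith
  have hgm : MonotoneOn (fun x => x * u x - p x - x * u θmin) (Set.Icc θmin θ) :=
    mono_of_hasDerivAt hg hg'
  have key := hgm (Set.left_mem_Icc.mpr hgt.le) (Set.right_mem_Icc.mpr hgt.le) hgt.le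
  simp only at key
  have h1 : θ * u θ - p θ - M ≥ (θ - θmin) * u θmin := by nlinarith
  refine ⟨h1, fun h0 => ?_⟩
  nlinarith [mul_nonneg (sub_nonneg.mpr hgt.le) h0]
end
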